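/- Let 1 < λ < 2 and let f(x) = λ·x·(1 − x), with μ = (λ − 1)/λ. For every x with 0 < x < 1, the iterates f^[k](x) converge to μ as k → ∞. -/

import Mathlib

/-- For `1 < λ < 2`, `f(x) = λ·x·(1−x)` and `μ = (λ−1)/λ`: for each `x ∈ (0,1)` the iterates
`f^[k](x)` converge to `μ`. -/
theorem logistic_iterates_tendsto_mu (lam : ℝ) (h1 : 1 < lam) (h2 : lam < 2)
    (x : ℝ) (hx0 : 0 < x) (hx1 : x < 1) :
    Filter.Tendsto (fun k : ℕ => (fun t : ℝ => lam * t * (1 - t))^[k] x)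
      Filter.atTop (nhds ((lam - 1) / lam)) := by
  set g : ℝ → ℝ := fun t => lam * t * (1 - t) with hg
  have hlam0 : (0:ℝ) < lam := by linarith
  set m : ℝ := (lam - 1) / lam with hmdef
  have hm : lam * m = lam - 1 := by rw [hmdef]; field_simp [hlam0.ne']
  have hm0 : 0 < m := div_pos (by linarith) hlam0
  have hmhalf : m < 1/2 := by rw [hmdef, div_lt_iff₀ hlam0]; linarith
  set y0 : ℝ := g x with hy0
  have hy0pos : 0 < y0 := mul_pos (mul_pos hlam0 hx0) (by linarith)
  have hy0half : y0 ≤ 1/2 := by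
    show lam * x * (1 - x) ≤ 1/2
    nlinarith [sq_nonneg (x - 1/2), mul_pos hx0 (show (0:ℝ) < 1 - x by linarith)]
  set δ : ℝ := min y0 m with hδ
  have hδ0 : 0 < δ := lt_min hy0pos hm0
  have hδm : δ ≤ m := min_le_right _ _
  have hδy0 : δ ≤ y0 := min_le_left _ _
  set q : ℝ := 1 - lam * δ with hq
  have hq0 : 0 ≤ q := by nlinarith [mul_le_mul_of_nonneg_left hδm hlam0.le]
  have hq1 : q < 1 := by nlinarith
  have step : ∀ y : ℝ, δ ≤ y → y ≤ 1/2 →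
      (δ ≤ g y ∧ g y ≤ 1/2 ∧ |g y - m| ≤ q * |y - m|) := by
    intro y hy1 hy2
    have hy0' : 0 < y := lt_of_lt_of_le hδ0 hy1
    refine ⟨?_, ?_, ?_⟩
    · show δ ≤ lam * y * (1 - y)
      nlinarith [mul_nonneg (sub_nonneg.mpr hy1)
          (show (0:ℝ) ≤ 1 - y - δ by linarith),
        mul_nonneg hδ0.le (show (0:ℝ) ≤ lam - 1 - lam * δ by
          nlinarith [mul_le_mul_of_nonneg_left hδm hlam0.le])]
    · show lam * y * (1 - y) ≤ 1/2
      nlinarith [sq_nonneg (y - 1/2), mul_pos hy0' (show (0:ℝ) < 1 - y by linarith)]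
    · have hid : g y - m = (lam * (1 - y - m)) * (y - m) := by
        have hne : lam ≠ 0 := ne_of_gt hlam0
        show lam * y * (1 - y) - m = _
        rw [hmdef]
        field_simp
        ring
      rw [hid, abs_mul]
      have hfac0 : 0 ≤ lam * (1 - y - m) := by nlinarith
      have hfac : |lam * (1 - y - m)| ≤ q := by
        rw [abs_of_nonneg hfac0]
        nlinarith [mul_le_mul_of_nonneg_left hy1 hlam0.le]
      exact mul_le_mul_of_nonneg_right hfac (abs_nonneg _)
  have key : ∀ k : ℕ, δ ≤ g^[k] y0 ∧ g^[k] y0 ≤ 1/2 ∧ |g^[k] y0 - m| ≤ q^k * |y0 - m| := by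
    intro k
    induction k with
    | zero =>
      simp only [Function.iterate_zero_apply, pow_zero, one_mul]
      exact ⟨hδy0, hy0half, le_rfl⟩
    | succ n ih =>
      obtain ⟨ha, hb, hc⟩ := ih
      obtain ⟨ha', hb', hc'⟩ := step _ ha hb
      rw [Function.iterate_succ_apply']
      refine ⟨ha', hb', ?_⟩
      calc |g (g^[n] y0) - m| ≤ q * |g^[n] y0 - m| := hc'
        _ ≤ q * (q^n * |y0 - m|) := mul_le_mul_of_nonneg_left hc hq0
        _ = q^(n+1) * |y0 - m| := by ring
  have hconv : Filter.Tendsto (fun k : ℕ => g^[k] y0) Filter.atTop (nhds m) := by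
    rw [tendsto_iff_dist_tendsto_zero]
    simp only [Real.dist_eq]
    apply squeeze_zero (fun k => abs_nonneg _) (fun k => (key k).2.2)
    have h := (tendsto_pow_atTop_nhds_zero_of_lt_one hq0 hq1).mul_const |y0 - m|
    simpa using h
  have hshift : (fun k : ℕ => g^[k + 1] x) = fun k : ℕ => g^[k] y0 := by
    funext k
    rw [hy0, hg, Function.iterate_succ_apply]
  rw [← hshift] at hconv
  exact (Filter.tendsto_add_atTop_iff_nat 1).mp hconv
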